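/- If (i_n) is a sequence of integers with i_n/√n → 0 and n + i_n even for all n, then the probability p_{n,i_n} that a simple random walk on ℤ starting at 0 is at i_n after n steps satisfies √n · p_{n, i_n} → √(2/π) as n → ∞. -/

import Mathlib

open Finset

/-- The displacement of a single step of the walk: `+1` or `-1`. -/
def step (b : Bool) : ℤ := if b then 1 else -1

/-- The position after the first `m` steps of the walk determined by the
sequence of coin flips `f`. -/
def pos {n : ℕ} (f : Fin n → Bool) (m : ℕ) : ℤ :=
  ∑ k ∈ Finset.univ.filter (fun k : Fin n => (k : ℕ) < m), step (f k)

/-- `walkProb n i` is the probability that a simple random walk on `ℤ`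
starting at `0` is at position `i` after `n` steps. -/
noncomputable def walkProb (n : ℕ) (i : ℤ) : ℝ :=
  ((Finset.univ.filter (fun f : Fin n → Bool => pos f n = i)).card : ℝ) / 2 ^ n


open Filter Real

lemma pos_eq {n : ℕ} (f : Fin n → Bool) :
    pos f n = 2 * ((univ.filter fun k => f k = true).card : ℤ) - n := by
  unfold pos
  have h1 : (univ.filter (fun k : Fin n => (k : ℕ) < n)) = univ := by
    apply Finset.filter_true_of_mem; intro k _; exact k.isLt
  rw [h1]
  have h2 : ∀ b, step b = 2 * (if b = true then (1:ℤ) else 0) - 1 := by decide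
  simp_rw [h2, Finset.sum_sub_distrib, Finset.sum_const, ← Finset.mul_sum,
    Finset.sum_boole, Finset.card_univ, Fintype.card_fin, nsmul_eq_mul, mul_one]

lemma card_fun (n t : ℕ) :
    ((univ : Finset (Fin n → Bool)).filter
      (fun f => (univ.filter fun k => f k = true).card = t)).card = n.choose t := by
  have hp : (Finset.powersetCard t (univ : Finset (Fin n))).card = n.choose t := by
    simp [Finset.card_powersetCard]
  rw [← hp]
  refine Finset.card_bij' (fun f _ => univ.filter fun k => f k = true)
    (fun S _ => fun k => decide (k ∈ S)) ?_ ?_ ?_ ?_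
  · intro f hf
    simp only [Finset.mem_filter, Finset.mem_univ, true_and] at hf
    simp [Finset.mem_powersetCard_univ, hf]
  · intro S hS
    simp only [Finset.mem_powersetCard_univ] at hS
    simp [hS]
  · intro f hf
    funext k
    simp
  · intro S hS
    ext k
    simp

lemma card_walk (n : ℕ) (i : ℤ) (hle : i.natAbs ≤ n) (hpar : Even ((n : ℤ) + i)) :
    ((univ.filter fun f : Fin n → Bool => pos f n = i)).card
      = n.choose (((n : ℤ) + i) / 2).toNat := by
  set t := (((n : ℤ) + i) / 2).toNat with ht
  have h2t : 2 * (t : ℤ) = (n : ℤ) + i := by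
    obtain ⟨r, hr⟩ := hpar
    have hnn : 0 ≤ (n : ℤ) + i := by omega
    omega
  rw [← card_fun n t]
  congr 1
  apply Finset.filter_congr
  intro f _
  rw [pos_eq]
  constructor <;> intro h <;> omega



lemma entropy_bounds {a b : ℝ} (ha : 0 < a) (hb : 0 < b) :
    0 ≤ a * log a + b * log b + (a+b) * log 2 - (a+b) * log (a+b) ∧
      a * log a + b * log b + (a+b) * log 2 - (a+b) * log (a+b) ≤ (a-b)^2/(a+b) := by
  set m := (a+b)/2 with hm
  have hm0 : 0 < m := by positivity
  have key : a * log a + b * log b + (a+b) * log 2 - (a+b) * log (a+b)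
      = a * log (a/m) + b * log (b/m) := by
    rw [log_div ha.ne' hm0.ne', log_div hb.ne' hm0.ne', hm,
      log_div (by positivity) two_ne_zero]
    ring
  have upA : log (a/m) ≤ a/m - 1 := log_le_sub_one_of_pos (by positivity)
  have upB : log (b/m) ≤ b/m - 1 := log_le_sub_one_of_pos (by positivity)
  have loA : 1 - m/a ≤ log (a/m) := by
    have h := log_le_sub_one_of_pos (x := m/a) (by positivity)
    rw [log_div hm0.ne' ha.ne'] at h
    rw [log_div ha.ne' hm0.ne']
    linarith
  have loB : 1 - m/b ≤ log (b/m) := by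
    have h := log_le_sub_one_of_pos (x := m/b) (by positivity)
    rw [log_div hm0.ne' hb.ne'] at h
    rw [log_div hb.ne' hm0.ne']
    linarith
  constructor
  · rw [key]
    have h1 : a * (1 - m/a) ≤ a * log (a/m) := by
      apply mul_le_mul_of_nonneg_left loA ha.le
    have h2 : b * (1 - m/b) ≤ b * log (b/m) := by
      apply mul_le_mul_of_nonneg_left loB hb.le
    have e1 : a * (1 - m/a) = a - m := by field_simp
    have e2 : b * (1 - m/b) = b - m := by field_simp
    have : a - m + (b - m) = 0 := by rw [hm]; ring
    linarith
  · rw [key]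
    have h1 : a * log (a/m) ≤ a * (a/m - 1) :=
      mul_le_mul_of_nonneg_left upA ha.le
    have h2 : b * log (b/m) ≤ b * (b/m - 1) :=
      mul_le_mul_of_nonneg_left upB hb.le
    have e3 : a * (a/m - 1) + b * (b/m - 1) = (a-b)^2/(a+b) := by
      rw [hm]; field_simp; ring
    linarith

lemma sPos {n : ℕ} (h : n ≠ 0) : 0 < Stirling.stirlingSeq n := by
  obtain ⟨m, rfl⟩ := Nat.exists_eq_succ_of_ne_zero h
  exact Stirling.stirlingSeq'_pos m

lemma fact_eq {n : ℕ} (h : n ≠ 0) :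
    (n.factorial : ℝ) = Stirling.stirlingSeq n * (Real.sqrt (2*n) * ((n:ℝ)/Real.exp 1)^n) := by
  have hn : 0 < (n : ℝ) := by exact_mod_cast Nat.pos_of_ne_zero h
  rw [Stirling.stirlingSeq, div_mul_cancel₀]
  positivity

lemma pow_eq {x : ℝ} (m : ℕ) (hx : 0 < x) :
    (x/Real.exp 1)^m = Real.exp (m * Real.log x) / Real.exp m := by
  rw [div_pow, ← Real.exp_log hx, ← Real.exp_nat_mul, ← Real.exp_nat_mul,
    Real.exp_log hx, mul_one]

set_option maxHeartbeats 1000000 in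
lemma choose_eq {n k : ℕ} (h1 : 1 ≤ k) (h2 : k < n) :
    Real.sqrt n * ((n.choose k : ℝ) / 2 ^ n)
      = (Stirling.stirlingSeq n / (Stirling.stirlingSeq k * Stirling.stirlingSeq (n-k)))
        * ((Real.sqrt n * Real.sqrt n) / (Real.sqrt 2 * (Real.sqrt k * Real.sqrt ((n-k:ℕ):ℝ))))
        * Real.exp ((n:ℝ) * Real.log n - (k:ℝ) * Real.log k
            - ((n-k:ℕ):ℝ) * Real.log ((n-k:ℕ):ℝ) - (n:ℝ) * Real.log 2) := by
  have hkn : k ≤ n := h2.le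
  have hn0 : n ≠ 0 := by omega
  have hk0 : k ≠ 0 := by omega
  have hb0 : n - k ≠ 0 := by omega
  have hnR : 0 < (n:ℝ) := by exact_mod_cast Nat.pos_of_ne_zero hn0
  have hkR : 0 < (k:ℝ) := by exact_mod_cast Nat.pos_of_ne_zero hk0
  have hbR : 0 < ((n-k:ℕ):ℝ) := by exact_mod_cast Nat.pos_of_ne_zero hb0
  have hab : (k:ℝ) + ((n-k:ℕ):ℝ) = (n:ℝ) := by
    push_cast [Nat.cast_sub hkn]; ring
  have he : Real.exp (n:ℝ) = Real.exp (k:ℝ) * Real.exp ((n-k:ℕ):ℝ) := by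
    rw [← Real.exp_add, hab]
  have h2n : (2:ℝ)^n = Real.exp ((n:ℝ) * Real.log 2) := by
    rw [← Real.exp_log (x := (2:ℝ)) two_pos, ← Real.exp_nat_mul, Real.exp_log two_pos]
  have hexp : Real.exp ((n:ℝ) * Real.log n - (k:ℝ) * Real.log k
        - ((n-k:ℕ):ℝ) * Real.log ((n-k:ℕ):ℝ) - (n:ℝ) * Real.log 2)
      = Real.exp ((n:ℝ) * Real.log n) / (Real.exp ((k:ℝ) * Real.log k)
        * Real.exp (((n-k:ℕ):ℝ) * Real.log ((n-k:ℕ):ℝ)) * Real.exp ((n:ℝ) * Real.log 2)) := by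
    rw [Real.exp_sub, Real.exp_sub, Real.exp_sub]; ring
  rw [Nat.cast_choose ℝ hkn, fact_eq hn0, fact_eq hk0, fact_eq hb0,
    Real.sqrt_mul (by norm_num : (0:ℝ) ≤ 2) (n:ℝ),
    Real.sqrt_mul (by norm_num : (0:ℝ) ≤ 2) (k:ℝ),
    Real.sqrt_mul (by norm_num : (0:ℝ) ≤ 2) ((n-k:ℕ):ℝ),
    pow_eq n hnR, pow_eq k hkR, pow_eq (n-k) hbR,
    h2n, hexp, he]
  have hsn : Real.sqrt (n:ℝ) ≠ 0 := by positivity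
  have hsk : Real.sqrt (k:ℝ) ≠ 0 := by positivity
  have hsb : Real.sqrt ((n-k:ℕ):ℝ) ≠ 0 := by positivity
  have hs2 : Real.sqrt 2 ≠ 0 := by positivity
  have hSn := (sPos hn0).ne'
  have hSk := (sPos hk0).ne'
  have hSb := (sPos hb0).ne'
  have hsb2 : Real.sqrt ((n:ℝ) - (k:ℝ)) ≠ 0 := by
    rw [← Nat.cast_sub hkn]; exact hsb
  field_simp

lemma sqrt_cast_atTop : Tendsto (fun n : ℕ => Real.sqrt n) atTop atTop := by
  rw [tendsto_atTop]
  intro b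
  filter_upwards [eventually_ge_atTop ⌈b^2⌉₊] with n hn
  rcases le_or_gt b 0 with hb | hb
  · exact hb.trans (Real.sqrt_nonneg _)
  · have h1 : b^2 ≤ (n:ℝ) := le_trans (Nat.le_ceil _) (by exact_mod_cast hn)
    calc b = Real.sqrt (b^2) := (Real.sqrt_sq hb.le).symm
    _ ≤ Real.sqrt n := Real.sqrt_le_sqrt h1

lemma asymp (k : ℕ → ℕ)
    (h : Tendsto (fun n : ℕ => ((2 * k n : ℝ) - n) / Real.sqrt n) atTop (nhds 0)) :
    Tendsto (fun n : ℕ => Real.sqrt n * ((n.choose (k n) : ℝ) / 2 ^ n)) atTop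
      (nhds (Real.sqrt (2 / Real.pi))) := by
  -- eventual bound |2k - n| ≤ √n
  have hb1 : ∀ᶠ n : ℕ in atTop, |(2 * (k n : ℝ) - n)| ≤ Real.sqrt n := by
    have h1 : ∀ᶠ n : ℕ in atTop, |((2 * (k n : ℝ)) - n) / Real.sqrt n| < 1 := by
      have habs : Tendsto (fun n : ℕ => |((2 * (k n : ℝ)) - n) / Real.sqrt n|) atTop (nhds 0) := by
        simpa using h.abs
      exact habs.eventually_lt_const one_pos
    filter_upwards [h1, eventually_ge_atTop 1] with n h1n hn
    have hs : 0 < Real.sqrt n := Real.sqrt_pos.mpr (by exact_mod_cast Nat.pos_of_ne_zero (by omega))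
    rw [abs_div, abs_of_nonneg (Real.sqrt_nonneg _), div_lt_one hs] at h1n
    exact h1n.le
  -- eventual structural facts
  have hev : ∀ᶠ n : ℕ in atTop, 1 ≤ k n ∧ k n < n ∧ (n:ℝ)/4 ≤ (k n : ℝ)
      ∧ (n:ℝ)/4 ≤ ((n - k n : ℕ) : ℝ) := by
    filter_upwards [hb1, eventually_ge_atTop 16] with n habs hn
    have hnR : (16:ℝ) ≤ (n:ℝ) := by exact_mod_cast hn
    have hsq : Real.sqrt n ≤ (n:ℝ)/2 := by
      have : ((n:ℝ)) ≤ ((n:ℝ)/2)^2 := by nlinarith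
      calc Real.sqrt n ≤ Real.sqrt (((n:ℝ)/2)^2) := Real.sqrt_le_sqrt this
      _ = (n:ℝ)/2 := Real.sqrt_sq (by linarith)
    have habs' : |2 * (k n : ℝ) - n| ≤ (n:ℝ)/2 := habs.trans hsq
    rw [abs_le] at habs'
    have hk1 : (1:ℝ) ≤ (k n : ℝ) := by linarith
    have hkn : (k n : ℝ) < (n:ℝ) := by linarith
    have hk1' : 1 ≤ k n := by exact_mod_cast hk1
    have hkn' : k n < n := by exact_mod_cast hkn
    refine ⟨hk1', hkn', by linarith, ?_⟩
    have : ((n - k n : ℕ) : ℝ) = (n:ℝ) - (k n : ℝ) := by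
      push_cast [Nat.cast_sub hkn'.le]; ring
    rw [this]; linarith
  -- k n → ∞ and n - k n → ∞
  have hktop : Tendsto k atTop atTop := by
    rw [tendsto_atTop]
    intro b
    filter_upwards [hev, eventually_ge_atTop (4*b)] with n hn hb
    have h1 : ((4*b:ℕ):ℝ) ≤ (n:ℝ) := by exact_mod_cast hb
    push_cast at h1
    have h3 : (b:ℝ) ≤ (k n : ℝ) := le_trans (by linarith) hn.2.2.1
    exact_mod_cast h3
  have hbtop : Tendsto (fun n => n - k n) atTop atTop := by
    rw [tendsto_atTop]
    intro b
    filter_upwards [hev, eventually_ge_atTop (4*b)] with n hn hb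
    have h1 : ((4*b:ℕ):ℝ) ≤ (n:ℝ) := by exact_mod_cast hb
    push_cast at h1
    have h3 : (b:ℝ) ≤ ((n - k n : ℕ) : ℝ) := le_trans (by linarith) hn.2.2.2
    exact_mod_cast h3
  -- factor 1
  have hpi : 0 < Real.sqrt Real.pi := Real.sqrt_pos.mpr Real.pi_pos
  have T1 : Tendsto (fun n => Stirling.stirlingSeq n
      / (Stirling.stirlingSeq (k n) * Stirling.stirlingSeq (n - k n))) atTop
      (nhds (Real.sqrt Real.pi / (Real.sqrt Real.pi * Real.sqrt Real.pi))) := by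
    refine Tendsto.div Stirling.tendsto_stirlingSeq_sqrt_pi
      (Tendsto.mul ?_ ?_) (by positivity)
    · exact Stirling.tendsto_stirlingSeq_sqrt_pi.comp hktop
    · exact Stirling.tendsto_stirlingSeq_sqrt_pi.comp hbtop
  -- k/n → 1/2
  have hinv : Tendsto (fun n : ℕ => (2 * Real.sqrt n)⁻¹) atTop (nhds 0) := by
    apply Filter.Tendsto.inv_tendsto_atTop
    exact (tendsto_const_mul_atTop_of_pos two_pos).mpr sqrt_cast_atTop
  have hkon : Tendsto (fun n : ℕ => (k n : ℝ)/n) atTop (nhds (1/2)) := by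
    have h0 : Tendsto (fun n : ℕ => ((2 * (k n : ℝ)) - n) / Real.sqrt n * (2 * Real.sqrt n)⁻¹)
        atTop (nhds 0) := by simpa using h.mul hinv
    have heq : ∀ᶠ n : ℕ in atTop, ((2 * (k n : ℝ)) - n) / Real.sqrt n * (2 * Real.sqrt n)⁻¹
        = (k n : ℝ)/n - 1/2 := by
      filter_upwards [eventually_ge_atTop 1] with n hn
      have hnR : (0:ℝ) < n := by exact_mod_cast Nat.pos_of_ne_zero (by omega)
      have hs : Real.sqrt n * Real.sqrt n = n := Real.mul_self_sqrt hnR.le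
      have hs0 : Real.sqrt n ≠ 0 := by positivity
      field_simp
      nlinarith [hs]
    have := (h0.congr' heq).add_const (1/2)
    simpa using this
  have hbon : Tendsto (fun n : ℕ => ((n - k n : ℕ) : ℝ)/n) atTop (nhds (1/2)) := by
    have h1 : Tendsto (fun n : ℕ => 1 - (k n : ℝ)/n) atTop (nhds (1/2)) := by
      have := (tendsto_const_nhds (x := (1:ℝ))).sub hkon
      norm_num at this ⊢
      exact this
    apply h1.congr'
    filter_upwards [hev] with n hn
    have hn0 : 0 < n := lt_of_le_of_lt (Nat.zero_le _) hn.2.1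
    have hnR : (0:ℝ) < n := by exact_mod_cast hn0
    have hc : ((n - k n : ℕ) : ℝ) = (n:ℝ) - (k n : ℝ) := by
      push_cast [Nat.cast_sub hn.2.1.le]; ring
    rw [hc]
    field_simp
  -- factor 2
  have hprod : Tendsto (fun n : ℕ => ((k n : ℝ)/n) * (((n - k n : ℕ) : ℝ)/n)) atTop
      (nhds (1/4)) := by
    have := hkon.mul hbon
    norm_num at this ⊢
    exact this
  have hG : Tendsto (fun n : ℕ => Real.sqrt (((k n : ℝ)/n) * (((n - k n : ℕ) : ℝ)/n))) atTop
      (nhds (1/2)) := by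
    have := (Real.continuous_sqrt.tendsto (1/4)).comp hprod
    have h14 : Real.sqrt (1/4) = 1/2 := by
      rw [show (1/4:ℝ) = (1/2)^2 by norm_num, Real.sqrt_sq (by norm_num)]
    rw [h14] at this
    exact this
  have hv2 : (Real.sqrt 2 * (1/2 : ℝ)) ≠ 0 := by positivity
  have T2' : Tendsto (fun n : ℕ =>
      (Real.sqrt 2 * Real.sqrt (((k n : ℝ)/n) * (((n - k n : ℕ) : ℝ)/n)))⁻¹) atTop
      (nhds ((Real.sqrt 2 * (1/2 : ℝ))⁻¹)) :=
    (Filter.Tendsto.mul tendsto_const_nhds hG).inv₀ hv2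
  have T2 : Tendsto (fun n : ℕ =>
      (Real.sqrt n * Real.sqrt n) / (Real.sqrt 2
        * (Real.sqrt (k n) * Real.sqrt ((n - k n : ℕ) : ℝ)))) atTop
      (nhds ((Real.sqrt 2 * (1/2 : ℝ))⁻¹)) := by
    apply T2'.congr'
    filter_upwards [hev] with n hn
    have hn0 : 0 < n := lt_of_le_of_lt (Nat.zero_le _) hn.2.1
    have hnR : (0:ℝ) < n := by exact_mod_cast hn0
    have hkR : (0:ℝ) < (k n : ℝ) := by exact_mod_cast hn.1
    have hbR : (0:ℝ) < ((n - k n : ℕ) : ℝ) := by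
      have h9 : 0 < n - k n := by omega
      exact_mod_cast h9
    have hsn : (0:ℝ) < Real.sqrt n := Real.sqrt_pos.mpr hnR
    have e1 : Real.sqrt (((k n : ℝ)/n) * (((n - k n : ℕ) : ℝ)/n))
        = (Real.sqrt (k n) * Real.sqrt ((n - k n : ℕ) : ℝ)) / (Real.sqrt n * Real.sqrt n) := by
      rw [Real.sqrt_mul (by positivity), Real.sqrt_div hkR.le, Real.sqrt_div hbR.le]
      ring
    rw [e1, mul_div_assoc', inv_div]
  -- factor 3
  have hx2 : Tendsto (fun n : ℕ => (((2 * (k n : ℝ)) - n) / Real.sqrt n)^2) atTop (nhds 0) := by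
    have := h.mul h
    norm_num at this
    apply this.congr
    intro n
    ring
  have T3' : Tendsto (fun n : ℕ => (k n : ℝ) * Real.log (k n)
      + ((n - k n : ℕ) : ℝ) * Real.log ((n - k n : ℕ) : ℝ)
      + (n:ℝ) * Real.log 2 - (n:ℝ) * Real.log n) atTop (nhds 0) := by
    apply tendsto_of_tendsto_of_tendsto_of_le_of_le' tendsto_const_nhds hx2
    · filter_upwards [hev] with n hn
      have hkR : (0:ℝ) < (k n : ℝ) := by exact_mod_cast hn.1
      have hbR : (0:ℝ) < ((n - k n : ℕ) : ℝ) := by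
        have h9 : 0 < n - k n := by omega
        exact_mod_cast h9
      have hab : (k n : ℝ) + ((n - k n : ℕ) : ℝ) = (n:ℝ) := by
        push_cast [Nat.cast_sub hn.2.1.le]; ring
      have h8 := (entropy_bounds hkR hbR).1
      rw [hab] at h8
      linarith
    · filter_upwards [hev] with n hn
      have hn0 : 0 < n := lt_of_le_of_lt (Nat.zero_le _) hn.2.1
      have hnR : (0:ℝ) < n := by exact_mod_cast hn0
      have hkR : (0:ℝ) < (k n : ℝ) := by exact_mod_cast hn.1
      have hbR : (0:ℝ) < ((n - k n : ℕ) : ℝ) := by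
        have h9 : 0 < n - k n := by omega
        exact_mod_cast h9
      have hab : (k n : ℝ) + ((n - k n : ℕ) : ℝ) = (n:ℝ) := by
        push_cast [Nat.cast_sub hn.2.1.le]; ring
      have hB := (entropy_bounds hkR hbR).2
      rw [hab] at hB
      have hd : ((k n : ℝ) - ((n - k n : ℕ) : ℝ))^2 / (n:ℝ)
          = (((2 * (k n : ℝ)) - n) / Real.sqrt n)^2 := by
        rw [div_pow, Real.sq_sqrt hnR.le]
        congr 2
        linarith [hab]
      rw [hd] at hB
      linarith
  have T3 : Tendsto (fun n : ℕ => Real.exp ((n:ℝ) * Real.log n - (k n : ℝ) * Real.log (k n)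
      - ((n - k n : ℕ) : ℝ) * Real.log ((n - k n : ℕ) : ℝ) - (n:ℝ) * Real.log 2)) atTop
      (nhds 1) := by
    have h0 : Tendsto (fun n : ℕ => -((k n : ℝ) * Real.log (k n)
        + ((n - k n : ℕ) : ℝ) * Real.log ((n - k n : ℕ) : ℝ)
        + (n:ℝ) * Real.log 2 - (n:ℝ) * Real.log n)) atTop (nhds 0) := by
      simpa using T3'.neg
    have h1 := (Real.continuous_exp.tendsto 0).comp h0
    rw [Real.exp_zero] at h1
    apply h1.congr
    intro n
    simp only [Function.comp]
    congr 1
    ring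
  -- assemble
  have Tall := (T1.mul T2).mul T3
  have hval : Real.sqrt Real.pi / (Real.sqrt Real.pi * Real.sqrt Real.pi)
      * (Real.sqrt 2 * (1/2 : ℝ))⁻¹ * 1 = Real.sqrt (2 / Real.pi) := by
    have h2 : Real.sqrt 2 * Real.sqrt 2 = 2 := Real.mul_self_sqrt (by norm_num)
    have hp : Real.sqrt Real.pi * Real.sqrt Real.pi = Real.pi := Real.mul_self_sqrt Real.pi_pos.le
    rw [Real.sqrt_div (by norm_num : (0:ℝ) ≤ 2)]
    field_simp
    nlinarith [hpi, Real.sqrt_nonneg (2:ℝ), Real.pi_pos]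
  rw [hval] at Tall
  apply Tall.congr'
  filter_upwards [hev] with n hn
  rw [choose_eq hn.1 hn.2.1]



lemma hkey (n : ℕ) (i : ℤ) (hle : i.natAbs ≤ n) (hpar : Even ((n:ℤ) + i)) :
    2 * (((((n:ℕ):ℤ) + i)/2).toNat : ℤ) = (n:ℤ) + i := by
  obtain ⟨r, hr⟩ := hpar
  omega

lemma natAbs_ev (i : ℕ → ℤ)
    (hsmall : Tendsto (fun n : ℕ => (i n : ℝ) / Real.sqrt n) atTop (nhds 0)) :
    ∀ᶠ n : ℕ in atTop, (i n).natAbs ≤ n := by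
  have habs : Tendsto (fun n : ℕ => |(i n : ℝ)/Real.sqrt n|) atTop (nhds 0) := by
    simpa using hsmall.abs
  have h1 := habs.eventually_lt_const one_pos
  filter_upwards [h1, eventually_ge_atTop 1] with n hn h1n
  have hnR : (1:ℝ) ≤ (n:ℝ) := by exact_mod_cast h1n
  have hs : 0 < Real.sqrt n := Real.sqrt_pos.mpr (by linarith)
  rw [abs_div, abs_of_nonneg (Real.sqrt_nonneg _), div_lt_one hs] at hn
  have hsn : Real.sqrt n ≤ (n:ℝ) := by
    calc Real.sqrt n ≤ Real.sqrt ((n:ℝ)^2) := Real.sqrt_le_sqrt (by nlinarith)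
    _ = (n:ℝ) := Real.sqrt_sq (by linarith)
  have h2 : ((i n).natAbs : ℝ) ≤ (n:ℝ) := by
    rw [Nat.cast_natAbs]
    push_cast
    exact le_trans hn.le hsn
  exact_mod_cast h2


theorem walkProb_asymptotic (i : ℕ → ℤ)
    (hsmall : Tendsto (fun n : ℕ => (i n : ℝ) / Real.sqrt n) atTop (nhds 0))
    (hparity : ∀ n : ℕ, Even ((n : ℤ) + i n)) :
    Tendsto (fun n : ℕ => Real.sqrt n * walkProb n (i n)) atTop
      (nhds (Real.sqrt (2 / Real.pi))) := by
  have hev1 := natAbs_ev i hsmall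
  have htend : Tendsto (fun n : ℕ =>
      ((2 * ((((n:ℤ) + i n)/2).toNat : ℕ) : ℝ) - n)/Real.sqrt n) atTop (nhds 0) := by
    apply hsmall.congr'
    filter_upwards [hev1] with n hn
    have hk := hkey n (i n) hn (hparity n)
    have hcast : (2 * (((((n:ℤ) + i n)/2).toNat : ℕ)) : ℝ) - n = (i n : ℝ) := by
      have : ((2 * (((((n:ℤ) + i n)/2).toNat : ℕ)) : ℤ) : ℝ) = (((n:ℤ) + i n : ℤ) : ℝ) := by
        exact_mod_cast congrArg (fun z : ℤ => (z : ℝ)) hk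
      push_cast at this ⊢
      linarith
    rw [hcast]
  have main := asymp (fun n => (((n:ℤ) + i n)/2).toNat) htend
  apply main.congr'
  filter_upwards [hev1] with n hn
  rw [walkProb, card_walk n (i n) hn (hparity n)]
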